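/- Let g be a finite-dimensional real Lie algebra with a nice basis (e_1, …, e_n) and structure constants c_{ijk} (the coefficient of e_k in ⁅e_i, e_j⁆). Then for every index k, the set { i ∈ {1,…,n} : there exists j with c_{ijk} ≠ 0 } has even cardinality. -/

import Mathlib

/-- The structure constants of a basis of a real Lie algebra. -/
noncomputable def structConst {g : Type*} [LieRing g] [LieAlgebra ℝ g] {n : ℕ}
    (b : Module.Basis (Fin n) ℝ g) (i j k : Fin n) : ℝ :=
  b.repr ⁅b i, b j⁆ k

/-- A basis of a real Lie algebra is *nice*. -/
def IsNiceBasis {g : Type*} [LieRing g] [LieAlgebra ℝ g] {n : ℕ}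
    (b : Module.Basis (Fin n) ℝ g) : Prop :=
  (∀ i j, ∃ (k : Fin n) (c : ℝ), ⁅b i, b j⁆ = c • b k) ∧
  (∀ i k j j', structConst b i j k ≠ 0 → structConst b i j' k ≠ 0 → j = j')

/-- Antisymmetry of the structure constants. -/
lemma structConst_antisymm {g : Type*} [LieRing g] [LieAlgebra ℝ g] {n : ℕ}
    (b : Module.Basis (Fin n) ℝ g) (i j k : Fin n) :
    structConst b j i k = - structConst b i j k := by
  unfold structConst
  rw [← lie_skew, map_neg]
  rfl

/-- A finset admitting a fixed-point-free involution has even cardinality. -/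
lemma even_card_of_involution {α : Type*} [DecidableEq α] (f : α → α) :
    ∀ s : Finset α, (∀ a ∈ s, f a ∈ s) → (∀ a ∈ s, f (f a) = a) →
      (∀ a ∈ s, f a ≠ a) → Even s.card := by
  intro s
  induction s using Finset.strongInduction with
  | _ s ih =>
    intro hmem hinv hne
    rcases s.eq_empty_or_nonempty with rfl | ⟨a, ha⟩
    · simp
    · have hfa : f a ∈ s := hmem a ha
      have hne' : f a ≠ a := hne a ha
      set t := (s.erase a).erase (f a) with ht
      have hts : t ⊂ s := by
        refine Finset.ssubset_of_subset_of_ssubset ?_ (Finset.erase_ssubset ha)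
        exact Finset.erase_subset _ _
      have hmemt : ∀ x, x ∈ t ↔ x ∈ s ∧ x ≠ a ∧ x ≠ f a := by
        intro x
        simp only [ht, Finset.mem_erase]
        tauto
      have key : ∀ x ∈ t, f x ∈ t := by
        intro x hx
        rw [hmemt] at hx ⊢
        obtain ⟨hxs, hxa, hxfa⟩ := hx
        refine ⟨hmem x hxs, ?_, ?_⟩
        · intro h
          apply hxfa
          rw [← hinv x hxs, h]
        · intro h
          apply hxa
          have := hinv x hxs
          rw [h, hinv a ha] at this
          exact this.symm
      have heven : Even t.card :=
        ih t hts key (fun x hx => hinv x ((hmemt x).mp hx).1)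
          (fun x hx => hne x ((hmemt x).mp hx).1)
      have hcard : s.card = t.card + 2 := by
        have h1 : (s.erase a).card = s.card - 1 := Finset.card_erase_of_mem ha
        have h2 : t.card = (s.erase a).card - 1 :=
          Finset.card_erase_of_mem (Finset.mem_erase.mpr ⟨hne', hfa⟩)
        have hpos : 1 ≤ s.card := Finset.card_pos.mpr ⟨a, ha⟩
        have hpos2 : 1 ≤ (s.erase a).card :=
          Finset.card_pos.mpr ⟨f a, Finset.mem_erase.mpr ⟨hne', hfa⟩⟩
        omega
      rw [hcard]
      obtain ⟨r, hr⟩ := heven; exact ⟨r + 1, by omega⟩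

/-- For a nice basis, every node of the associated diagram has an even number of incoming
arrows: for each `k`, the set of `i` such that `c_{ijk} ≠ 0` for some `j` has even
cardinality. -/
theorem even_card_incoming_arrows (g : Type*) [LieRing g] [LieAlgebra ℝ g]
    [FiniteDimensional ℝ g] {n : ℕ} (b : Module.Basis (Fin n) ℝ g) (hb : IsNiceBasis b)
    (k : Fin n) :
    Even (Nat.card {i : Fin n // ∃ j, structConst b i j k ≠ 0}) := by
  classical
  set P : Fin n → Prop := fun i => ∃ j, structConst b i j k ≠ 0 with hP
  have hcard : Nat.card {i : Fin n // P i} =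
      (Finset.univ.filter P).card := by
    rw [Nat.card_eq_fintype_card, Fintype.card_subtype]
  rw [hcard]
  -- the involution
  set f : Fin n → Fin n := fun i => if h : P i then h.choose else i with hf
  have hmem : ∀ i ∈ Finset.univ.filter P, f i ∈ Finset.univ.filter P := by
    intro i hi
    rw [Finset.mem_filter] at hi ⊢
    obtain ⟨-, hi⟩ := hi
    refine ⟨Finset.mem_univ _, ?_⟩
    have hj : structConst b i (hi.choose) k ≠ 0 := hi.choose_spec
    refine ⟨i, ?_⟩
    have : f i = hi.choose := dif_pos hi
    rw [this, structConst_antisymm]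
    simpa using hj
  have hne : ∀ i ∈ Finset.univ.filter P, f i ≠ i := by
    intro i hi hfi
    rw [Finset.mem_filter] at hi
    obtain ⟨-, hi⟩ := hi
    have hj : structConst b i (hi.choose) k ≠ 0 := hi.choose_spec
    have hchoose : f i = hi.choose := dif_pos hi
    rw [hfi] at hchoose
    rw [← hchoose] at hj
    apply hj
    unfold structConst
    simp
  have hinv : ∀ i ∈ Finset.univ.filter P, f (f i) = i := by
    intro i hi
    rw [Finset.mem_filter] at hi
    obtain ⟨-, hi⟩ := hi
    have hj : structConst b i (hi.choose) k ≠ 0 := hi.choose_spec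
    have hfi : f i = hi.choose := dif_pos hi
    have hPfi : P (f i) := by
      refine ⟨i, ?_⟩
      rw [hfi, structConst_antisymm]
      simpa using hj
    have hffi : f (f i) = hPfi.choose := dif_pos hPfi
    have h1 : structConst b (f i) (hPfi.choose) k ≠ 0 := hPfi.choose_spec
    have h2 : structConst b (f i) i k ≠ 0 := by
      rw [hfi, structConst_antisymm]; simpa using hj
    rw [hffi]
    exact hb.2 (f i) k _ _ h1 h2
  exact even_card_of_involution f _ hmem hinv hne
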